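/- For every z ∈ ℝ with z ≠ 0: ( ∫_0^∞ u^{−1/2} e^{−z²u/2} du ) / ( ∫_0^∞ u^{−1/2} (1+u)^{−1} e^{−z²u/2} du ) = e^{−z²/2} / ( √(2π) · |z| · (1 − Φ(|z|)) ), where Φ(v) = (2π)^{−1/2} ∫_{−∞}^{v} e^{−s²/2} ds is the standard normal cumulative distribution function. -/

import Mathlib

open MeasureTheory Set Real

/-- The standard normal cumulative distribution function. -/
noncomputable def stdNormalCDF (y : ℝ) : ℝ :=
  (Real.sqrt (2 * Real.pi))⁻¹ * ∫ s in Set.Iic y, Real.exp (-s ^ 2 / 2)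

namespace ArcsineAux

lemma gamma_half_int {b : ℝ} (hb : 0 < b) :
    ∫ u in Ioi (0:ℝ), u ^ (-(1:ℝ)/2) * Real.exp (-(b * u)) =
      Real.sqrt π / Real.sqrt b := by
  have h := Real.integral_rpow_mul_exp_neg_mul_Ioi (a := (1:ℝ)/2) (r := b) (by norm_num) hb
  rw [show ((1:ℝ)/2 - 1) = -(1:ℝ)/2 by norm_num] at h
  rw [h, Real.Gamma_one_half_eq, ← Real.sqrt_eq_rpow, one_div, Real.sqrt_inv, inv_mul_eq_div]

lemma gamma_half_integrable {b : ℝ} (hb : 0 < b) :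
    IntegrableOn (fun u : ℝ => u ^ (-(1:ℝ)/2) * Real.exp (-(b * u))) (Ioi 0) := by
  have h := integrableOn_rpow_mul_exp_neg_mul_rpow (s := -(1:ℝ)/2) (p := 1)
    (by norm_num) one_pos hb
  refine h.congr_fun (fun x hx => ?_) measurableSet_Ioi
  simp only [Real.rpow_one, neg_mul]

lemma exp_inv_int {r : ℝ} (hr : 0 < r) :
    ∫ t in Ioi (0:ℝ), Real.exp (-(r * t)) = r⁻¹ := by
  have h := Real.integral_rpow_mul_exp_neg_mul_Ioi (a := 1) (r := r) one_pos hr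
  simp only [sub_self, Real.rpow_zero, one_mul, Real.Gamma_one, mul_one, Real.rpow_one] at h
  rw [h, one_div]

lemma gauss_total : ∫ x : ℝ, Real.exp (-x ^ 2 / 2) = Real.sqrt (2 * π) := by
  have h := integral_gaussian (1/2 : ℝ)
  rw [show π / (1/2 : ℝ) = 2 * π by ring] at h
  rw [show (fun x : ℝ => Real.exp (-x ^ 2 / 2)) = fun x : ℝ => Real.exp (-(1/2) * x ^ 2) by
    ext x; congr 1; ring]
  exact h

lemma gauss_integrable : Integrable (fun x : ℝ => Real.exp (-x ^ 2 / 2)) := by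
  have h := integrable_exp_neg_mul_sq (by norm_num : (0:ℝ) < 1/2)
  rw [show (fun x : ℝ => Real.exp (-x ^ 2 / 2)) = fun x : ℝ => Real.exp (-(1/2) * x ^ 2) by
    ext x; congr 1; ring]
  exact h

lemma sqrt_two_mul_pi : Real.sqrt (2 * π) = Real.sqrt 2 * Real.sqrt π :=
  Real.sqrt_mul (by norm_num) π

lemma num_eval {c : ℝ} (hc : 0 < c) :
    ∫ u in Ioi (0:ℝ), u ^ (-(1:ℝ)/2) * Real.exp (-(c ^ 2 * u) / 2) =
      Real.sqrt (2 * π) / c := by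
  have h1 : ∀ u ∈ Ioi (0:ℝ), u ^ (-(1:ℝ)/2) * Real.exp (-(c ^ 2 * u) / 2) =
      u ^ (-(1:ℝ)/2) * Real.exp (-((c ^ 2 / 2) * u)) := by
    intro u _; congr 2; ring
  rw [setIntegral_congr_fun measurableSet_Ioi h1, gamma_half_int (by positivity)]
  have h2 : Real.sqrt (c ^ 2 / 2) = c / Real.sqrt 2 := by
    rw [show c ^ 2 / 2 = (c / Real.sqrt 2) ^ 2 by
      rw [div_pow, Real.sq_sqrt (by norm_num : (0:ℝ) ≤ 2)]]
    exact Real.sqrt_sq (by positivity)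
  rw [h2, sqrt_two_mul_pi]
  have h2' : Real.sqrt 2 ≠ 0 := by positivity
  field_simp

lemma denom_eval {c : ℝ} (hc : 0 < c) :
    ∫ u in Ioi (0:ℝ), u ^ (-(1:ℝ)/2) * (1 + u)⁻¹ * Real.exp (-(c ^ 2 * u) / 2)
      = Real.sqrt (2 * π) * Real.exp (c ^ 2 / 2) * ∫ w in Ioi c, Real.exp (-w ^ 2 / 2) := by
  set b : ℝ := c ^ 2 / 2 with hbdef
  have hb : 0 < b := by positivity
  set F : ℝ → ℝ → ℝ := fun u t =>
    u ^ (-(1:ℝ)/2) * Real.exp (-(b * u)) * Real.exp (-((1 + u) * t)) with hFdef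
  -- Step 1: write the integrand as an inner integral over t
  have step1 : ∫ u in Ioi (0:ℝ), u ^ (-(1:ℝ)/2) * (1 + u)⁻¹ * Real.exp (-(c ^ 2 * u) / 2)
      = ∫ u in Ioi (0:ℝ), ∫ t in Ioi (0:ℝ), F u t := by
    refine setIntegral_congr_fun measurableSet_Ioi (fun u hu => ?_)
    have hu0 : (0:ℝ) < u := hu
    simp only [hFdef]
    rw [integral_const_mul, exp_inv_int (by linarith : (0:ℝ) < 1 + u),
      show -(c ^ 2 * u) / 2 = -(b * u) by rw [hbdef]; ring]
    ring
  -- Integrability on the product space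
  have hmeas : AEStronglyMeasurable (Function.uncurry F)
      ((volume.restrict (Ioi 0)).prod (volume.restrict (Ioi 0))) := by
    apply Measurable.aestronglyMeasurable
    fun_prop
  have hint : Integrable (Function.uncurry F)
      ((volume.restrict (Ioi 0)).prod (volume.restrict (Ioi 0))) := by
    have h1 : Integrable (fun u : ℝ => u ^ (-(1:ℝ)/2) * Real.exp (-(b * u)))
        (volume.restrict (Ioi 0)) := gamma_half_integrable hb
    have h2 : Integrable (fun t : ℝ => Real.exp (-t)) (volume.restrict (Ioi 0)) := by
      have h := exp_neg_integrableOn_Ioi 0 (one_pos : (0:ℝ) < 1)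
      refine h.congr_fun (fun x _ => ?_) measurableSet_Ioi
      simp only [neg_mul, one_mul]
    refine (h1.mul_prod h2).mono' hmeas ?_
    rw [Measure.prod_restrict]
    filter_upwards [ae_restrict_mem (measurableSet_Ioi.prod measurableSet_Ioi)] with p hp
    obtain ⟨hp1, hp2⟩ := hp
    have hu : (0:ℝ) < p.1 := hp1
    have ht : (0:ℝ) < p.2 := hp2
    have hF : Function.uncurry F p =
        p.1 ^ (-(1:ℝ)/2) * Real.exp (-(b * p.1)) * Real.exp (-((1 + p.1) * p.2)) := rfl
    rw [hF, Real.norm_eq_abs, abs_of_nonneg (by positivity)]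
    have hle : Real.exp (-((1 + p.1) * p.2)) ≤ Real.exp (-p.2) := by
      apply Real.exp_le_exp.2
      nlinarith
    exact mul_le_mul_of_nonneg_left hle (by positivity)
  -- Step 2: swap the order of integration
  have step2 : ∫ u in Ioi (0:ℝ), ∫ t in Ioi (0:ℝ), F u t
      = ∫ t in Ioi (0:ℝ), ∫ u in Ioi (0:ℝ), F u t :=
    integral_integral_swap hint
  -- Step 3: evaluate the inner integral over u
  have step3 : ∫ t in Ioi (0:ℝ), ∫ u in Ioi (0:ℝ), F u t
      = ∫ t in Ioi (0:ℝ), Real.exp (-t) * (Real.sqrt π / Real.sqrt (b + t)) := by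
    refine setIntegral_congr_fun measurableSet_Ioi (fun t ht => ?_)
    have ht0 : (0:ℝ) < t := ht
    have h1 : ∀ u ∈ Ioi (0:ℝ), F u t =
        Real.exp (-t) * (u ^ (-(1:ℝ)/2) * Real.exp (-((b + t) * u))) := by
      intro u _
      simp only [hFdef]
      rw [mul_assoc, ← Real.exp_add,
        show -(b * u) + -((1 + u) * t) = -t + -((b + t) * u) by ring, Real.exp_add]
      ring
    rw [setIntegral_congr_fun measurableSet_Ioi h1, integral_const_mul,
      gamma_half_int (by linarith : (0:ℝ) < b + t)]
  -- Step 4: change of variable t = w^2/2 - b, w ∈ Ioi c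
  have hderiv : ∀ x ∈ Ioi c, HasDerivWithinAt (fun w : ℝ => w ^ 2 / 2 - b) x (Ioi c) x := by
    intro x _
    have h : HasDerivAt (fun w : ℝ => w ^ 2 / 2 - b) x x := by
      have := ((hasDerivAt_pow 2 x).div_const 2).sub_const b
      simpa using this
    exact h.hasDerivWithinAt
  have hinj : InjOn (fun w : ℝ => w ^ 2 / 2 - b) (Ioi c) := by
    intro x hx y hy hxy
    have hx0 : (0:ℝ) < x := lt_trans hc hx
    have hy0 : (0:ℝ) < y := lt_trans hc hy
    have h2 : x ^ 2 = y ^ 2 := by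
      have : x ^ 2 / 2 - b = y ^ 2 / 2 - b := hxy
      linarith
    nlinarith [sq_nonneg (x - y), sq_nonneg (x + y)]
  have himg : (fun w : ℝ => w ^ 2 / 2 - b) '' Ioi c = Ioi (0:ℝ) := by
    ext y
    simp only [mem_image, mem_Ioi]
    constructor
    · rintro ⟨w, hw, rfl⟩
      have hw0 : (0:ℝ) < w := lt_trans hc hw
      have : c ^ 2 < w ^ 2 := by nlinarith
      rw [hbdef]; linarith
    · intro hy
      refine ⟨Real.sqrt (2 * (y + b)), ?_, ?_⟩
      · have h1 : c = Real.sqrt (c ^ 2) := (Real.sqrt_sq hc.le).symm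
        rw [h1]
        apply Real.sqrt_lt_sqrt (by positivity)
        rw [hbdef]; linarith
      · rw [Real.sq_sqrt (by linarith : (0:ℝ) ≤ 2 * (y + b))]; ring
  have hsub := integral_image_eq_integral_abs_deriv_smul measurableSet_Ioi hderiv hinj
    (fun t => Real.exp (-t) * (Real.sqrt π / Real.sqrt (b + t)))
  rw [himg] at hsub
  -- Step 5: simplify the substituted integrand
  have step5 : ∫ w in Ioi c, |w| • (Real.exp (-(w ^ 2 / 2 - b)) *
      (Real.sqrt π / Real.sqrt (b + (w ^ 2 / 2 - b))))
      = ∫ w in Ioi c, Real.sqrt (2 * π) * Real.exp b * Real.exp (-w ^ 2 / 2) := by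
    refine setIntegral_congr_fun measurableSet_Ioi (fun w hw => ?_)
    have hw0 : (0:ℝ) < w := lt_trans hc hw
    have h1 : b + (w ^ 2 / 2 - b) = w ^ 2 / 2 := by ring
    have h2 : Real.sqrt (w ^ 2 / 2) = w / Real.sqrt 2 := by
      rw [show w ^ 2 / 2 = (w / Real.sqrt 2) ^ 2 by
        rw [div_pow, Real.sq_sqrt (by norm_num : (0:ℝ) ≤ 2)]]
      exact Real.sqrt_sq (by positivity)
    have h3 : Real.exp (-(w ^ 2 / 2 - b)) = Real.exp b * Real.exp (-w ^ 2 / 2) := by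
      rw [← Real.exp_add]; congr 1; ring
    rw [h1, h2, h3, smul_eq_mul, abs_of_pos hw0, sqrt_two_mul_pi]
    have hs2 : Real.sqrt 2 ≠ 0 := by positivity
    field_simp
  rw [step1, step2, step3, hsub, step5, integral_const_mul]

end ArcsineAux

open ArcsineAux in
/-- the closed form of the function `g` appearing in the conditional
pinning rate under the arcsine prior `B(1/2,1/2)`:
`g(z) = e^{−z²/2}/(√(2π)|z|(1−Φ(|z|)))`. -/
theorem arcsine_prior_g_closed_form (z : ℝ) (hz : z ≠ 0) :
    (∫ u in Set.Ioi (0:ℝ), u ^ (-(1:ℝ)/2) * Real.exp (-(z ^ 2 * u) / 2)) /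
      (∫ u in Set.Ioi (0:ℝ), u ^ (-(1:ℝ)/2) * (1 + u)⁻¹ * Real.exp (-(z ^ 2 * u) / 2)) =
      Real.exp (-z ^ 2 / 2) /
        (Real.sqrt (2 * Real.pi) * |z| * (1 - stdNormalCDF |z|)) := by
  have hc : (0:ℝ) < |z| := abs_pos.2 hz
  rw [← sq_abs z, num_eval hc, denom_eval hc]
  simp only [stdNormalCDF]
  set T : ℝ := ∫ w in Ioi |z|, Real.exp (-w ^ 2 / 2) with hTdef
  have hIic : ∫ s in Iic |z|, Real.exp (-s ^ 2 / 2) = Real.sqrt (2 * π) - T := by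
    have h := intervalIntegral.integral_Iic_add_Ioi (b := |z|) (gauss_integrable.integrableOn)
      (gauss_integrable.integrableOn)
    rw [gauss_total] at h
    linarith
  rw [hIic]
  have hπ : (0:ℝ) < Real.sqrt (2 * π) := Real.sqrt_pos.2 (by positivity)
  have hT : 0 < T := by
    rw [hTdef]
    refine (setIntegral_pos_iff_support_of_nonneg_ae ?_ gauss_integrable.integrableOn).2 ?_
    · filter_upwards with x using (Real.exp_pos _).le
    · have hs : Function.support (fun w : ℝ => Real.exp (-w ^ 2 / 2)) = univ := by
        ext x; simp [Real.exp_ne_zero]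
      rw [hs, univ_inter, Real.volume_Ioi]
      exact ENNReal.zero_lt_top
  have h1 : (1 : ℝ) - (Real.sqrt (2 * π))⁻¹ * (Real.sqrt (2 * π) - T)
      = (Real.sqrt (2 * π))⁻¹ * T := by
    field_simp
    ring
  rw [h1]
  have hexp : Real.exp (-|z| ^ 2 / 2) = (Real.exp (|z| ^ 2 / 2))⁻¹ := by
    rw [show -|z| ^ 2 / 2 = -(|z| ^ 2 / 2) by ring, Real.exp_neg]
  rw [hexp]
  have hE : Real.exp (|z| ^ 2 / 2) ≠ 0 := Real.exp_ne_zero _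
  field_simp
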